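/- Let G₁ and G₂ be connected simple graphs, each on n vertices with m edges, with signless Laplacian spectra μ⁺₁ ≥ ⋯ ≥ μ⁺_n > 1 and λ⁺₁ ≥ ⋯ ≥ λ⁺_n > 1 respectively (all signless Laplacian eigenvalues greater than one). If p is a positive integer such that 2m/(p+n) < min(μ⁺_n − 1, λ⁺_n − 1), then LE⁺((G₁ ∪ K̄_p) × K_p) = LE⁺((G₂ ∪ K̄_p) × K_p). -/

import Mathlib

open SimpleGraph Matrix Finset

/-- The number of edges of a simple graph. -/
noncomputable def edgeCount {V : Type*} (G : SimpleGraph V) : ℕ := G.edgeSet.ncard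

/-- The Laplacian spectrum of a finite simple graph, as a multiset of real numbers. -/
noncomputable def lapSpec {V : Type*} [Fintype V] (G : SimpleGraph V) : Multiset ℝ := by
  classical
  exact Finset.univ.val.map (G.posSemidef_lapMatrix ℝ).1.eigenvalues

/-- The signless Laplacian matrix `D + A` is Hermitian. -/
theorem signless_isHermitian {V : Type*} [Fintype V] [DecidableEq V] (G : SimpleGraph V)
    [DecidableRel G.Adj] : (G.degMatrix ℝ + G.adjMatrix ℝ).IsHermitian := by
  rw [Matrix.IsHermitian, conjTranspose_eq_transpose_of_trivial]
  exact Matrix.IsSymm.add (isSymm_degMatrix (G := G) (R := ℝ)) (isSymm_adjMatrix (G := G) (α := ℝ))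

/-- The signless Laplacian spectrum of a finite simple graph, as a multiset of reals. -/
noncomputable def signlessLapSpec {V : Type*} [Fintype V] (G : SimpleGraph V) : Multiset ℝ := by
  classical
  exact Finset.univ.val.map (signless_isHermitian G).eigenvalues

/-- The Laplacian energy `LE(G) = ∑ |μ_i - 2m/n|`. -/
noncomputable def lapEnergy {V : Type*} [Fintype V] (G : SimpleGraph V) : ℝ :=
  ((lapSpec G).map (fun x => |x - 2 * (edgeCount G : ℝ) / (Fintype.card V : ℝ)|)).sum

/-- The signless Laplacian energy `LE⁺(G) = ∑ |μ⁺_i - 2m/n|`. -/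
noncomputable def signlessLapEnergy {V : Type*} [Fintype V] (G : SimpleGraph V) : ℝ :=
  ((signlessLapSpec G).map (fun x => |x - 2 * (edgeCount G : ℝ) / (Fintype.card V : ℝ)|)).sum

/-- The join `G ∨ H` of two graphs: disjoint union plus all edges between them. -/
def SimpleGraph.join {V W : Type*} (G : SimpleGraph V) (H : SimpleGraph W) :
    SimpleGraph (V ⊕ W) where
  Adj a b :=
    match a, b with
    | Sum.inl u, Sum.inl v => G.Adj u v
    | Sum.inr u, Sum.inr v => H.Adj u v
    | Sum.inl _, Sum.inr _ => True
    | Sum.inr _, Sum.inl _ => True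
  symm := ⟨by rintro (u | u) (v | v) h <;> simp_all [adj_comm]⟩
  loopless := ⟨by rintro (u | u) h <;> simp_all⟩

/-- The tensor (Kronecker) product `G ⊗ H` of two graphs. -/
def SimpleGraph.tensorProd {V W : Type*} (G : SimpleGraph V) (H : SimpleGraph W) :
    SimpleGraph (V × W) where
  Adj a b := G.Adj a.1 b.1 ∧ H.Adj a.2 b.2
  symm := ⟨fun a b h => ⟨G.adj_symm h.1, H.adj_symm h.2⟩⟩
  loopless := ⟨fun a h => G.irrefl h.1⟩

section Aux
open Polynomial Kronecker

lemma my_charpoly_diagonal {n : Type*} [Fintype n] [DecidableEq n] (d : n → ℝ) :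
    (Matrix.diagonal d).charpoly = ∏ i, (X - C (d i)) := by
  have h : charmatrix (Matrix.diagonal d) = Matrix.diagonal fun i => (X : ℝ[X]) - C (d i) := by
    ext i j
    by_cases h : i = j
    · subst h; simp [charmatrix_apply_eq]
    · rw [charmatrix_apply_ne _ _ _ h]; simp [Matrix.diagonal_apply_ne _ h]
  rw [Matrix.charpoly, h, Matrix.det_diagonal]

lemma my_charpoly_conj {n : Type*} [Fintype n] [DecidableEq n] (U B V : Matrix n n ℝ)
    (hUV : U * V = 1) : (U * B * V).charpoly = B.charpoly := by
  have hmap : charmatrix (U * B * V)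
      = (U.map C) * charmatrix B * (V.map C) := by
    rw [charmatrix]
    rw [charmatrix]
    rw [Matrix.mul_sub, Matrix.sub_mul]
    congr 1
    · rw [mul_assoc, scalar_commute (X : ℝ[X]) (Commute.all _) (V.map C)]
      rw [← mul_assoc, ← Matrix.map_mul, hUV]
      simp
    · simp [RingHom.mapMatrix_apply, ← Matrix.map_mul]
  rw [Matrix.charpoly, Matrix.charpoly, hmap, Matrix.det_mul, Matrix.det_mul]
  have h1 : (U.map C).det * (V.map C).det = 1 := by
    rw [← Matrix.det_mul, ← Matrix.map_mul, hUV]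
    simp
  calc (U.map ⇑C).det * (charmatrix B).det * (V.map ⇑C).det
      = (U.map ⇑C).det * (V.map ⇑C).det * (charmatrix B).det := by ring
    _ = (charmatrix B).det := by rw [h1, one_mul]

lemma my_herm_charpoly {n : Type*} [Fintype n] [DecidableEq n]
    {A : Matrix n n ℝ} (hA : A.IsHermitian) :
    A.charpoly = ∏ i, (X - C (hA.eigenvalues i)) := by
  have hU1 : (hA.eigenvectorUnitary : Matrix n n ℝ) * star (hA.eigenvectorUnitary : Matrix n n ℝ) = 1 :=
    Matrix.mem_unitaryGroup_iff.mp hA.eigenvectorUnitary.2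
  calc A.charpoly
      = ((hA.eigenvectorUnitary : Matrix n n ℝ) * Matrix.diagonal (RCLike.ofReal ∘ hA.eigenvalues)
        * star (hA.eigenvectorUnitary : Matrix n n ℝ)).charpoly := by
        congr 1; exact hA.spectral_theorem
    _ = (Matrix.diagonal (RCLike.ofReal ∘ hA.eigenvalues)).charpoly :=
        my_charpoly_conj _ _ _ hU1
    _ = ∏ i, (X - C (hA.eigenvalues i)) := by
        rw [my_charpoly_diagonal]; simp

lemma my_herm_spec {n : Type*} [Fintype n] [DecidableEq n]
    {A : Matrix n n ℝ} (hA : A.IsHermitian) :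
    Finset.univ.val.map hA.eigenvalues = A.charpoly.roots := by
  rw [my_herm_charpoly hA]
  have h : ∏ i, (X - C (hA.eigenvalues i))
      = ((Finset.univ.val.map hA.eigenvalues).map (fun a => X - C a)).prod := by
    rw [Multiset.map_map]; rfl
  rw [h, Polynomial.roots_multiset_prod_X_sub_C]

lemma my_herm_trace {n : Type*} [Fintype n] [DecidableEq n]
    {A : Matrix n n ℝ} (hA : A.IsHermitian) :
    ∑ i, hA.eigenvalues i = A.trace := by
  have hU2 : star (hA.eigenvectorUnitary : Matrix n n ℝ) * (hA.eigenvectorUnitary : Matrix n n ℝ) = 1 :=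
    Matrix.mem_unitaryGroup_iff'.mp hA.eigenvectorUnitary.2
  calc ∑ i, hA.eigenvalues i
      = (Matrix.diagonal (RCLike.ofReal ∘ hA.eigenvalues) : Matrix n n ℝ).trace := by
        simp [Matrix.trace_diagonal]
    _ = A.trace := by
        conv_rhs => rw [hA.spectral_theorem, Unitary.conjStarAlgAut_apply]
        rw [Matrix.trace_mul_comm, ← mul_assoc, hU2, one_mul]

lemma herm_spec_any {V : Type*} [Fintype V] (de1 de2 : DecidableEq V)
    (A1 A2 : Matrix V V ℝ) (h : A1 = A2) (hA : A1.IsHermitian) :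
    Finset.univ.val.map (@Matrix.IsHermitian.eigenvalues ℝ _ V _ A1 de1 hA)
      = (@Matrix.charpoly ℝ _ V de2 _ A2).roots := by
  subst h
  have h2 : de1 = de2 := Subsingleton.elim _ _
  subst h2
  exact my_herm_spec hA

lemma herm_trace_any {V : Type*} [Fintype V] (de1 : DecidableEq V)
    (A1 A2 : Matrix V V ℝ) (h : A1 = A2) (hA : A1.IsHermitian) :
    ∑ i, (@Matrix.IsHermitian.eigenvalues ℝ _ V _ A1 de1 hA) i = A2.trace := by
  subst h
  exact my_herm_trace hA

lemma Q_indep {V : Type*} [Fintype V] (G : SimpleGraph V)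
    (dr1 dr2 : DecidableRel G.Adj) (de1 de2 : DecidableEq V) :
    @SimpleGraph.degMatrix V ℝ _ G dr1 de1 _ + @SimpleGraph.adjMatrix ℝ V G dr1 _ _
      = @SimpleGraph.degMatrix V ℝ _ G dr2 de2 _ + @SimpleGraph.adjMatrix ℝ V G dr2 _ _ := by
  have h1 : dr1 = dr2 := Subsingleton.elim _ _
  have h2 : de1 = de2 := Subsingleton.elim _ _
  subst h1; subst h2; rfl

lemma spec_eq_roots {V : Type*} [Fintype V] [DecidableEq V] (G : SimpleGraph V)
    [DecidableRel G.Adj] :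
    signlessLapSpec G = (G.degMatrix ℝ + G.adjMatrix ℝ).charpoly.roots := by
  unfold signlessLapSpec
  exact herm_spec_any _ _ _ _ (Q_indep G _ _ _ _) _

lemma spec_sum {V : Type*} [Fintype V] [DecidableEq V] (G : SimpleGraph V)
    [DecidableRel G.Adj] :
    (signlessLapSpec G).sum = (G.degMatrix ℝ + G.adjMatrix ℝ).trace := by
  unfold signlessLapSpec
  exact herm_trace_any _ _ _ (Q_indep G _ _ _ _) _

lemma trace_Q {V : Type*} [Fintype V] [DecidableEq V] (G : SimpleGraph V)
    [DecidableRel G.Adj] :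
    (G.degMatrix ℝ + G.adjMatrix ℝ).trace = 2 * (edgeCount G : ℝ) := by
  rw [Matrix.trace_add, SimpleGraph.trace_adjMatrix, add_zero]
  have h1 : (G.degMatrix ℝ).trace = ∑ v, (G.degree v : ℝ) := by
    rw [degMatrix, Matrix.trace_diagonal]
  rw [h1]
  have h2 : edgeCount G = G.edgeFinset.card := by
    rw [edgeCount, SimpleGraph.edgeFinset, Set.ncard_eq_toFinset_card']
  rw [h2]
  rw [← Nat.cast_sum]
  rw [SimpleGraph.sum_degrees_eq_twice_card_edges]
  push_cast
  ring

lemma roots_charpoly_diagonal {n : Type*} [Fintype n] [DecidableEq n] (d : n → ℝ) :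
    (Matrix.diagonal d).charpoly.roots = Finset.univ.val.map d := by
  rw [my_charpoly_diagonal]
  have h : ∏ i, (X - C (d i)) = ((Finset.univ.val.map d).map (fun a => X - C a)).prod := by
    rw [Multiset.map_map]; rfl
  rw [h, Polynomial.roots_multiset_prod_X_sub_C]

lemma kron_sum_charpoly_roots {α β : Type*} [Fintype α] [Fintype β] [DecidableEq α] [DecidableEq β]
    {A : Matrix α α ℝ} {B : Matrix β β ℝ}
    (hA : A.IsHermitian) (hB : B.IsHermitian) :
    (A ⊗ₖ (1 : Matrix β β ℝ) + (1 : Matrix α α ℝ) ⊗ₖ B).charpoly.roots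
      = Finset.univ.val.map (fun q : α × β => hA.eigenvalues q.1 + hB.eigenvalues q.2) := by
  set U := (hA.eigenvectorUnitary : Matrix α α ℝ) with hU
  set V := (hB.eigenvectorUnitary : Matrix β β ℝ) with hV
  have hU1 : U * star U = 1 := Matrix.mem_unitaryGroup_iff.mp hA.eigenvectorUnitary.2
  have hV1 : V * star V = 1 := Matrix.mem_unitaryGroup_iff.mp hB.eigenvectorUnitary.2
  have hAd : A = U * Matrix.diagonal hA.eigenvalues * star U := by
    have := hA.spectral_theorem
    simpa [RCLike.ofReal_real_eq_id] using this
  have hBd : B = V * Matrix.diagonal hB.eigenvalues * star V := by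
    have := hB.spectral_theorem
    simpa [RCLike.ofReal_real_eq_id] using this
  have key : A ⊗ₖ (1 : Matrix β β ℝ) + (1 : Matrix α α ℝ) ⊗ₖ B
      = (U ⊗ₖ V) * Matrix.diagonal (fun q : α × β => hA.eigenvalues q.1 + hB.eigenvalues q.2)
        * ((star U) ⊗ₖ (star V)) := by
    have hD : Matrix.diagonal (fun q : α × β => hA.eigenvalues q.1 + hB.eigenvalues q.2)
        = (Matrix.diagonal hA.eigenvalues) ⊗ₖ (1 : Matrix β β ℝ)
          + (1 : Matrix α α ℝ) ⊗ₖ (Matrix.diagonal hB.eigenvalues) := by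
      rw [show (1 : Matrix β β ℝ) = Matrix.diagonal (fun _ => (1:ℝ)) by simp,
          show (1 : Matrix α α ℝ) = Matrix.diagonal (fun _ => (1:ℝ)) by simp,
          Matrix.diagonal_kronecker_diagonal, Matrix.diagonal_kronecker_diagonal,
          Matrix.diagonal_add]
      simp
    rw [hD, Matrix.mul_add, Matrix.add_mul]
    congr 1
    · rw [← Matrix.mul_kronecker_mul, ← Matrix.mul_kronecker_mul, ← hAd, mul_one, hV1]
    · rw [← Matrix.mul_kronecker_mul, ← Matrix.mul_kronecker_mul, ← hBd, mul_one, hU1]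
  rw [key, my_charpoly_conj _ _ _
    (by rw [← Matrix.mul_kronecker_mul, hU1, hV1, Matrix.one_kronecker_one]),
    roots_charpoly_diagonal]

lemma deg_sum_inl {α β : Type*} [Fintype α] [Fintype β] (G : SimpleGraph α) (H : SimpleGraph β)
    [DecidableRel G.Adj] [DecidableRel H.Adj] [DecidableRel (G ⊕g H).Adj] (i : α) :
    (G ⊕g H).degree (Sum.inl i) = G.degree i := by
  unfold SimpleGraph.degree
  rw [show (G ⊕g H).neighborFinset (Sum.inl i)
      = (G.neighborFinset i).map ⟨Sum.inl, Sum.inl_injective⟩ by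
    ext w; cases w <;> simp [mem_neighborFinset]]
  rw [Finset.card_map]

lemma deg_sum_inr {α β : Type*} [Fintype α] [Fintype β] (G : SimpleGraph α) (H : SimpleGraph β)
    [DecidableRel G.Adj] [DecidableRel H.Adj] [DecidableRel (G ⊕g H).Adj] (i : β) :
    (G ⊕g H).degree (Sum.inr i) = H.degree i := by
  unfold SimpleGraph.degree
  rw [show (G ⊕g H).neighborFinset (Sum.inr i)
      = (H.neighborFinset i).map ⟨Sum.inr, Sum.inr_injective⟩ by
    ext w; cases w <;> simp [mem_neighborFinset]]
  rw [Finset.card_map]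

lemma Q_boxProd {α β : Type*} [Fintype α] [Fintype β] [DecidableEq α] [DecidableEq β]
    (G : SimpleGraph α) (H : SimpleGraph β)
    [DecidableRel G.Adj] [DecidableRel H.Adj] [DecidableRel (G □ H).Adj] :
    (G □ H).degMatrix ℝ + (G □ H).adjMatrix ℝ
      = (G.degMatrix ℝ + G.adjMatrix ℝ) ⊗ₖ (1 : Matrix β β ℝ)
        + (1 : Matrix α α ℝ) ⊗ₖ (H.degMatrix ℝ + H.adjMatrix ℝ) := by
  ext ⟨a, b⟩ ⟨c, d⟩
  simp only [Matrix.add_apply, degMatrix, adjMatrix_apply, Matrix.diagonal_apply,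
    Matrix.kroneckerMap_apply, Matrix.one_apply]
  simp only [SimpleGraph.degree_boxProd]
  push_cast
  by_cases hac : a = c <;> by_cases hbd : b = d
  · subst hac; subst hbd
    simp [boxProd_adj]
  · subst hac
    by_cases hAdj : H.Adj b d
    · simp [hbd, boxProd_adj, hAdj]
    · simp [hbd, boxProd_adj, hAdj]
  · subst hbd
    by_cases hAdj : G.Adj a c
    · simp [hac, boxProd_adj, hAdj]
    · simp [hac, boxProd_adj, hAdj]
  · have h : ¬ (G □ H).Adj (a, b) (c, d) := by
      simp [boxProd_adj, hac, hbd]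
    simp [hac, hbd, Prod.ext_iff, h]

lemma Q_sum_bot {α β : Type*} [Fintype α] [Fintype β] [DecidableEq α] [DecidableEq β]
    (G : SimpleGraph α) [DecidableRel G.Adj] [DecidableRel (G ⊕g (⊥ : SimpleGraph β)).Adj] :
    (G ⊕g (⊥ : SimpleGraph β)).degMatrix ℝ + (G ⊕g (⊥ : SimpleGraph β)).adjMatrix ℝ
      = Matrix.fromBlocks (G.degMatrix ℝ + G.adjMatrix ℝ) 0 0 0 := by
  ext u v
  cases u with
  | inl i => cases v with
    | inl j =>
      simp only [Matrix.add_apply, degMatrix, adjMatrix_apply, Matrix.diagonal_apply,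
        Matrix.fromBlocks_apply₁₁]
      by_cases hij : i = j
      · subst hij; simp [deg_sum_inl]
      · simp [hij]
    | inr j => simp [degMatrix]
  | inr i => cases v with
    | inl j => simp [degMatrix]
    | inr j =>
      simp only [Matrix.add_apply, degMatrix, adjMatrix_apply, Matrix.diagonal_apply,
        Matrix.fromBlocks_apply₂₂]
      by_cases hij : i = j
      · subst hij
        rw [deg_sum_inr]
        simp [SimpleGraph.bot_degree]
      · simp [hij]

lemma eig_top_ge (p : ℕ) (hp : 0 < p)
    (hB : ((⊤ : SimpleGraph (Fin p)).degMatrix ℝ + (⊤ : SimpleGraph (Fin p)).adjMatrix ℝ).IsHermitian)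
    (j : Fin p) : (p : ℝ) - 2 ≤ hB.eigenvalues j := by
  set v : Fin p → ℝ := ⇑(hB.eigenvectorBasis j) with hv
  have hnorm : ∑ i, v i * v i = 1 := by
    have h1 : ‖hB.eigenvectorBasis j‖ = 1 := hB.eigenvectorBasis.orthonormal.1 j
    have h2 : (inner ℝ (hB.eigenvectorBasis j) (hB.eigenvectorBasis j) : ℝ) = 1 := by
      rw [real_inner_self_eq_norm_sq, h1]; norm_num
    rw [← h2, PiLp.inner_apply]
    simp [RCLike.inner_apply, v, sq]
  have heig := hB.eigenvalues_eq j
  rw [heig]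
  have hmv : ∀ i, ((((⊤ : SimpleGraph (Fin p)).degMatrix ℝ + (⊤ : SimpleGraph (Fin p)).adjMatrix ℝ)) *ᵥ v) i
      = ((p : ℝ) - 1) * v i + ((∑ k, v k) - v i) := by
    intro i
    rw [Matrix.add_mulVec]
    simp only [Pi.add_apply]
    rw [SimpleGraph.degMatrix_mulVec_apply, SimpleGraph.adjMatrix_mulVec_apply]
    congr 1
    · rw [SimpleGraph.complete_graph_degree]
      rw [Fintype.card_fin]
      push_cast [Nat.cast_sub hp]
      ring
    · rw [show (⊤ : SimpleGraph (Fin p)).neighborFinset i = Finset.univ.erase i by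
        ext w; simp [SimpleGraph.mem_neighborFinset, ne_comm]]
      rw [Finset.sum_erase_eq_sub (Finset.mem_univ i)]
  simp only [RCLike.re_to_real]
  have hdot : dotProduct (star v) ((((⊤ : SimpleGraph (Fin p)).degMatrix ℝ + (⊤ : SimpleGraph (Fin p)).adjMatrix ℝ)) *ᵥ v)
      = ((p : ℝ) - 2) + (∑ k, v k) ^ 2 := by
    rw [dotProduct]
    simp only [Pi.star_apply, star_trivial]
    calc ∑ i, v i * ((((⊤ : SimpleGraph (Fin p)).degMatrix ℝ + (⊤ : SimpleGraph (Fin p)).adjMatrix ℝ)) *ᵥ v) i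
        = ∑ i, (((p : ℝ) - 2) * (v i * v i) + (∑ k, v k) * v i) := by
          apply Finset.sum_congr rfl
          intro i _
          rw [hmv i]; ring
      _ = ((p : ℝ) - 2) + (∑ k, v k) ^ 2 := by
          rw [Finset.sum_add_distrib, ← Finset.mul_sum, ← Finset.mul_sum, hnorm]
          ring
  rw [hdot]
  nlinarith [sq_nonneg (∑ k, v k)]

/-- Eigenvalues of the signless Laplacian of the complete graph on `Fin p`. -/
noncomputable def bEig (p : ℕ) : Fin p → ℝ :=
  (signless_isHermitian (⊤ : SimpleGraph (Fin p))).eigenvalues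

lemma trace_QK (p : ℕ) (hp : 0 < p) :
    ((⊤ : SimpleGraph (Fin p)).degMatrix ℝ + (⊤ : SimpleGraph (Fin p)).adjMatrix ℝ).trace
      = (p : ℝ) * ((p : ℝ) - 1) := by
  rw [Matrix.trace_add, SimpleGraph.trace_adjMatrix, add_zero, degMatrix, Matrix.trace_diagonal]
  have h : ∀ j : Fin p, ((⊤ : SimpleGraph (Fin p)).degree j : ℝ) = (p : ℝ) - 1 := by
    intro j
    rw [SimpleGraph.complete_graph_degree, Fintype.card_fin]
    push_cast [Nat.cast_sub hp]
    ring
  rw [Finset.sum_congr rfl (fun j _ => h j)]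
  simp [mul_comm]
  ring

end Aux

section Main
open Polynomial Kronecker

lemma energy_one (n m p : ℕ) (hn : 1 ≤ n) (hp : 0 < p)
    (G : SimpleGraph (Fin n)) (hm : edgeCount G = m)
    (μ : Fin n → ℝ) (hμmono : Antitone μ)
    (hμspec : signlessLapSpec G = Finset.univ.val.map μ)
    (hcond : 2 * (m : ℝ) / ((p : ℝ) + (n : ℝ)) < μ ⟨n - 1, by omega⟩ - 1) :
    signlessLapEnergy ((G ⊕g (⊥ : SimpleGraph (Fin p))) □ (⊤ : SimpleGraph (Fin p)))
      = (p : ℝ) * (2 * m)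
        + (n : ℝ) * ((∑ j, bEig p j) - p * (2 * (m:ℝ) / ((n:ℝ)+p) + ((p:ℝ) - 1)))
        + (p : ℝ) * (∑ j, |bEig p j - (2 * (m:ℝ) / ((n:ℝ)+p) + ((p:ℝ) - 1))|) := by
  classical
  set t : ℝ := 2 * (m:ℝ) / ((n:ℝ)+p) + ((p:ℝ) - 1) with ht_def
  have hnp : (0:ℝ) < (n:ℝ) + p := by positivity
  have hp' : (0:ℝ) < (p:ℝ) := by exact_mod_cast hp
  have hQH := signless_isHermitian (G ⊕g (⊥ : SimpleGraph (Fin p)))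
  have hQK := signless_isHermitian (⊤ : SimpleGraph (Fin p))
  -- the eigenvalues of Q(K_p) agree with bEig
  have hbeq : hQK.eigenvalues = bEig p := rfl
  -- spectrum of the big graph
  have hspec1 : signlessLapSpec ((G ⊕g (⊥ : SimpleGraph (Fin p))) □ (⊤ : SimpleGraph (Fin p)))
      = Finset.univ.val.map
          (fun q : (Fin n ⊕ Fin p) × Fin p => hQH.eigenvalues q.1 + hQK.eigenvalues q.2) := by
    rw [spec_eq_roots, Q_boxProd, kron_sum_charpoly_roots hQH hQK]
  -- spectrum of G ⊕g ⊥
  have hspecH : Finset.univ.val.map hQH.eigenvalues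
      = Finset.univ.val.map μ + Multiset.replicate p 0 := by
    rw [my_herm_spec hQH, Q_sum_bot, Matrix.charpoly_fromBlocks_zero₂₁,
      Polynomial.roots_mul (mul_ne_zero (Matrix.charpoly_monic _).ne_zero
        (Matrix.charpoly_monic _).ne_zero)]
    congr 1
    · rw [← spec_eq_roots G, hμspec]
    · rw [show (0 : Matrix (Fin p) (Fin p) ℝ) = Matrix.diagonal (fun _ => (0:ℝ)) by simp,
        roots_charpoly_diagonal]
      simp [Multiset.map_const']
  -- trace facts
  have htrH : ((G ⊕g (⊥ : SimpleGraph (Fin p))).degMatrix ℝ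
      + (G ⊕g (⊥ : SimpleGraph (Fin p))).adjMatrix ℝ).trace = 2 * (m : ℝ) := by
    rw [Q_sum_bot]
    have hfb : (Matrix.fromBlocks (G.degMatrix ℝ + G.adjMatrix ℝ) 0 0
        (0 : Matrix (Fin p) (Fin p) ℝ)).trace = (G.degMatrix ℝ + G.adjMatrix ℝ).trace := by
      rw [Matrix.trace]
      rw [Fintype.sum_sum_type]
      simp [Matrix.diag, Matrix.trace]
    rw [hfb, trace_Q, hm]
  -- the average degree
  have hedge : 2 * (edgeCount ((G ⊕g (⊥ : SimpleGraph (Fin p))) □ (⊤ : SimpleGraph (Fin p))) : ℝ)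
      = 2 * (m:ℝ) * p + ((n:ℝ)+p) * ((p:ℝ) * ((p:ℝ) - 1)) := by
    rw [← trace_Q, Q_boxProd, Matrix.trace_add, Matrix.trace_kronecker, Matrix.trace_kronecker,
      Matrix.trace_one, Matrix.trace_one, htrH, trace_QK p hp]
    simp only [Fintype.card_sum, Fintype.card_fin]
    push_cast
    ring
  have hcardV : ((Fintype.card ((Fin n ⊕ Fin p) × Fin p)) : ℝ) = ((n:ℝ)+p) * p := by
    simp [Fintype.card_prod, Fintype.card_sum, Fintype.card_fin]
  have ht : 2 * (edgeCount ((G ⊕g (⊥ : SimpleGraph (Fin p))) □ (⊤ : SimpleGraph (Fin p))) : ℝ)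
      / ((Fintype.card ((Fin n ⊕ Fin p) × Fin p)) : ℝ) = t := by
    rw [hedge, hcardV, ht_def]
    field_simp
  -- sum of μ
  have hsum_mu : ∑ i, μ i = 2 * (m:ℝ) := by
    have h1 : (signlessLapSpec G).sum = 2 * (m:ℝ) := by
      rw [spec_sum G, trace_Q, hm]
    rw [hμspec] at h1
    rw [← h1]
    rfl
  -- lower bound for eigenvalues of Q(K_p)
  have hbge : ∀ j, (p:ℝ) - 2 ≤ bEig p j := by
    intro j
    rw [← hbeq]
    exact eig_top_ge p hp hQK j
  -- lower bound for μ
  have hmu_lb : ∀ i, 2 * (m:ℝ) / ((n:ℝ)+p) + 1 < μ i := by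
    intro i
    have h1 : μ i ≥ μ ⟨n - 1, by omega⟩ := by
      apply hμmono
      rw [Fin.le_def]
      simp only []
      omega
    have h2 : 2 * (m : ℝ) / ((p : ℝ) + (n : ℝ)) = 2 * (m:ℝ) / ((n:ℝ)+p) := by ring_nf
    rw [h2] at hcond
    linarith
  -- the inner sum function
  set S : ℝ → ℝ := fun x => ∑ j, |x + bEig p j - t| with hS_def
  have hS_pos : ∀ x, 2 * (m:ℝ) / ((n:ℝ)+p) + 1 < x →
      S x = (p:ℝ) * x + ((∑ j, bEig p j) - p * t) := by
    intro x hx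
    rw [hS_def]
    simp only []
    have : ∀ j ∈ Finset.univ (α := Fin p), |x + bEig p j - t| = x + bEig p j - t := by
      intro j _
      apply abs_of_nonneg
      have := hbge j
      rw [ht_def]
      linarith
    rw [Finset.sum_congr rfl this]
    rw [show ∀ (f : Fin p → ℝ), ∑ j, (x + f j - t) = ∑ j, ((x - t) + f j) by
      intro f; apply Finset.sum_congr rfl; intro j _; ring]
    rw [Finset.sum_add_distrib, Finset.sum_const, Finset.card_univ, Fintype.card_fin]
    push_cast
    ring
  -- main computation
  unfold signlessLapEnergy
  rw [hspec1]
  simp only [ht]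
  rw [Multiset.map_map]
  have hconv : ((Finset.univ.val).map
      ((fun x => |x - t|) ∘ (fun q : (Fin n ⊕ Fin p) × Fin p =>
        hQH.eigenvalues q.1 + hQK.eigenvalues q.2))).sum
      = ∑ q : (Fin n ⊕ Fin p) × Fin p, |hQH.eigenvalues q.1 + hQK.eigenvalues q.2 - t| := rfl
  rw [hconv, Fintype.sum_prod_type]
  have hconv2 : ∑ i : Fin n ⊕ Fin p, ∑ j : Fin p, |hQH.eigenvalues i + hQK.eigenvalues j - t|
      = ((Finset.univ.val.map hQH.eigenvalues).map S).sum := by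
    rw [Multiset.map_map]
    rfl
  rw [hconv2, hspecH, Multiset.map_add, Multiset.sum_add, Multiset.map_map,
    Multiset.map_replicate, Multiset.sum_replicate]
  have hpart1 : (Finset.univ.val.map (S ∘ μ)).sum = ∑ i, S (μ i) := rfl
  rw [hpart1]
  have hpart2 : ∑ i, S (μ i) = (p:ℝ) * (2 * m) + (n:ℝ) * ((∑ j, bEig p j) - p * t) := by
    have : ∀ i ∈ Finset.univ (α := Fin n), S (μ i) = (p:ℝ) * μ i + ((∑ j, bEig p j) - p * t) :=
      fun i _ => hS_pos (μ i) (hmu_lb i)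
    rw [Finset.sum_congr rfl this, Finset.sum_add_distrib, ← Finset.mul_sum, hsum_mu,
      Finset.sum_const, Finset.card_univ, Fintype.card_fin]
    push_cast
    ring
  have hS0 : S 0 = ∑ j, |bEig p j - t| := by
    rw [hS_def]
    simp
  rw [hpart2, hS0]
  push_cast
  ring
end Main

theorem stmt8 (n m p : ℕ) (hn : 1 ≤ n) (hp : 0 < p)
    (G₁ G₂ : SimpleGraph (Fin n))
    (hc₁ : G₁.Connected) (hc₂ : G₂.Connected)
    (hm₁ : edgeCount G₁ = m) (hm₂ : edgeCount G₂ = m)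
    (μ ν : Fin n → ℝ) (hμmono : Antitone μ) (hνmono : Antitone ν)
    (hμspec : signlessLapSpec G₁ = Finset.univ.val.map μ)
    (hνspec : signlessLapSpec G₂ = Finset.univ.val.map ν)
    (hμpos : 1 < μ ⟨n - 1, by omega⟩) (hνpos : 1 < ν ⟨n - 1, by omega⟩)
    (hcond : 2 * (m : ℝ) / ((p : ℝ) + (n : ℝ)) < min (μ ⟨n - 1, by omega⟩ - 1) (ν ⟨n - 1, by omega⟩ - 1)) :
    signlessLapEnergy ((G₁ ⊕g (⊥ : SimpleGraph (Fin p))) □ (⊤ : SimpleGraph (Fin p))) = signlessLapEnergy ((G₂ ⊕g (⊥ : SimpleGraph (Fin p))) □ (⊤ : SimpleGraph (Fin p))) := by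
  rw [lt_min_iff] at hcond
  rw [energy_one n m p hn hp G₁ hm₁ μ hμmono hμspec hcond.1,
    energy_one n m p hn hp G₂ hm₂ ν hνmono hνspec hcond.2]
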